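/- Let X be a real normed (or locally convex) space and f₁, …, f_n : X → ℝ ∪ {±∞} be convex and lower semicontinuous functions such that f := max_{1≤k≤n} f_k has nonempty effective domain. Then inf_{x∈X} f(x) = max_{λ∈Δ_n} inf_{x∈X} Σ_{k=1}^n λ_k f_k(x), where the convention 0·(−∞) = 0 and 0·(+∞) = +∞ is used, Δ_n is the standard n-simplex, and the maximum is attained. -/

import Mathlib

open Filter Topology

def IsConvexEFn {E : Type*} [AddCommGroup E] [Module ℝ E] (g : E → EReal) : Prop :=
  Convex ℝ {p : E × ℝ | g p.1 ≤ (p.2 : EReal)}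

/-- Scalar multiplication with the conventions `0·(+∞) = +∞` and `0·(−∞) = 0`. -/
noncomputable def smul0 (a : ℝ) (v : EReal) : EReal :=
  if a = 0 then (if v = ⊤ then ⊤ else 0) else (a : EReal) * v

section AuxStmt8
open Finset

lemma ecoe_sum {ι : Type*} (s : Finset ι) (g : ι → ℝ) :
    ((∑ i ∈ s, g i : ℝ) : EReal) = ∑ i ∈ s, ((g i : ℝ) : EReal) := by
  classical
  induction s using Finset.induction with
  | empty => simp
  | @insert _ _ h ih => rw [Finset.sum_insert h, Finset.sum_insert h, EReal.coe_add, ih]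

lemma esum_eq_bot {ι : Type*} {s : Finset ι} {t : ι → EReal} {j : ι} (hj : j ∈ s)
    (h : t j = ⊥) : ∑ i ∈ s, t i = ⊥ := by
  classical
  rw [Finset.sum_eq_add_sum_sdiff_singleton_of_mem hj, h, EReal.bot_add]

lemma esum_ne_bot {ι : Type*} {s : Finset ι} {t : ι → EReal}
    (h : ∀ i ∈ s, t i ≠ ⊥) : ∑ i ∈ s, t i ≠ ⊥ := by
  classical
  induction s using Finset.induction with
  | empty => simp
  | @insert a s' hm ih =>
    rw [Finset.sum_insert hm]
    have h1 := h a (Finset.mem_insert_self a s')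
    have h2 := ih fun i hi => h i (Finset.mem_insert_of_mem hi)
    intro hc
    rcases EReal.add_eq_bot_iff.mp hc with hc | hc
    · exact h1 hc
    · exact h2 hc

lemma esum_eq_top {ι : Type*} {s : Finset ι} {t : ι → EReal} {j : ι} (hj : j ∈ s)
    (htop : t j = ⊤) (h : ∀ i ∈ s, t i ≠ ⊥) : ∑ i ∈ s, t i = ⊤ := by
  classical
  rw [Finset.sum_eq_add_sum_sdiff_singleton_of_mem hj, htop]
  exact EReal.top_add_of_ne_bot (esum_ne_bot fun i hi => h i (Finset.mem_sdiff.mp hi).1)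

lemma eq_bot_of_le_coe {v : EReal} (h : ∀ u : ℝ, v ≤ (u : EReal)) : v = ⊥ := by
  induction v using EReal.rec with
  | bot => rfl
  | coe r => exact absurd (EReal.coe_le_coe_iff.mp (h (r-1))) (by linarith)
  | top => exact absurd (h 0) (by simp)

lemma improper_bot {X : Type*} [NormedAddCommGroup X] [NormedSpace ℝ X]
    {f : X → EReal} (hlsc : LowerSemicontinuous f) (hconv : IsConvexEFn f)
    {z x : X} (hz : f z = ⊥) (hx : f x ≠ ⊤) : f x = ⊥ := by
  by_contra hbx
  obtain ⟨g, hg⟩ : ∃ g : ℝ, f x = (g : EReal) :=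
    ⟨(f x).toReal, (EReal.coe_toReal hx hbx).symm⟩
  have key : ∀ s : ℝ, 0 < s → s ≤ 1 → f (s • z + (1 - s) • x) = ⊥ := by
    intro s hs hs1
    apply eq_bot_of_le_coe
    intro u
    set t : ℝ := (u - (1 - s) * g) / s with ht
    have mem1 : ((z, t) : X × ℝ) ∈ {p : X × ℝ | f p.1 ≤ (p.2 : EReal)} := by
      simp [hz]
    have mem2 : ((x, g) : X × ℝ) ∈ {p : X × ℝ | f p.1 ≤ (p.2 : EReal)} := by
      simp [hg]
    have := hconv mem1 mem2 (le_of_lt hs) (by linarith : (0:ℝ) ≤ 1 - s) (by ring)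
    simp only [Prod.smul_mk, Prod.mk_add_mk, Set.mem_setOf_eq, smul_eq_mul] at this
    have harith : s * t + (1 - s) * g = u := by
      have h' : t * s = u - (1 - s) * g := by rw [ht]; exact div_mul_cancel₀ _ (ne_of_gt hs)
      linarith
    rwa [harith] at this
  have hlt : ((g - 1 : ℝ) : EReal) < f x := by
    rw [hg]; exact_mod_cast (by linarith : g - 1 < g)
  have hev := hlsc x _ hlt
  have T : Filter.Tendsto (fun s : ℝ => s • z + (1 - s) • x) (nhdsWithin 0 (Set.Ioi 0)) (nhds x) := by
    have hc : Continuous (fun s : ℝ => s • z + (1 - s) • x) := by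
      exact (continuous_id.smul continuous_const).add
        ((continuous_const.sub continuous_id).smul continuous_const)
    have := hc.tendsto 0
    simp only [zero_smul, sub_zero, one_smul, zero_add] at this
    exact this.mono_left nhdsWithin_le_nhds
  have hev' := T.eventually hev
  have hmem : Set.Ioc (0:ℝ) 1 ∈ nhdsWithin (0:ℝ) (Set.Ioi 0) :=
    Ioc_mem_nhdsGT_of_mem ⟨le_refl 0, zero_lt_one⟩
  obtain ⟨s, hs1, hs2⟩ := (hev'.and (Filter.eventually_of_mem hmem fun y hy => hy)).exists
  rw [key s hs2.1 hs2.2] at hs1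
  exact absurd hs1 (by simp)

lemma weak_aux {ι : Type*} [Fintype ι] (m : ι → ℝ) (hm0 : ∀ k, 0 ≤ m k)
    (hm1 : ∑ k, m k = 1) (v : ι → EReal) : ∑ k, smul0 (m k) (v k) ≤ ⨆ k, v k := by
  classical
  cases isEmpty_or_nonempty ι with
  | inl h => simp at hm1
  | inr h =>
  by_cases hstop : (⨆ k, v k) = ⊤
  · rw [hstop]; exact le_top
  have hvlt : ∀ k, v k ≠ ⊤ := fun k hk => hstop (top_unique (hk ▸ le_iSup v k))
  by_cases hb : ∃ k, m k ≠ 0 ∧ v k = ⊥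
  · obtain ⟨k, hk, hvk⟩ := hb
    have : smul0 (m k) (v k) = ⊥ := by
      rw [smul0, if_neg hk, hvk]
      exact EReal.mul_bot_of_pos (by exact_mod_cast lt_of_le_of_ne (hm0 k) (Ne.symm hk))
    rw [esum_eq_bot (Finset.mem_univ k) this]
    exact bot_le
  push_neg at hb
  obtain ⟨k₀, hk₀⟩ : ∃ k, m k ≠ 0 := by
    by_contra hc; push_neg at hc
    rw [Finset.sum_congr rfl (fun k _ => hc k)] at hm1
    simp at hm1
  have hsbot : (⨆ k, v k) ≠ ⊥ := by
    intro hc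
    exact (hb k₀ hk₀) (le_bot_iff.mp (hc ▸ le_iSup v k₀))
  obtain ⟨σ, hσ⟩ : ∃ σ : ℝ, (⨆ k, v k) = (σ : EReal) :=
    ⟨(⨆ k, v k).toReal, (EReal.coe_toReal hstop hsbot).symm⟩
  have hterm : ∀ k, smul0 (m k) (v k) ≤ ((m k * σ : ℝ) : EReal) := by
    intro k
    by_cases hmk : m k = 0
    · rw [smul0, if_pos hmk, if_neg (hvlt k), hmk, zero_mul]
      exact le_refl _
    · have hvb : v k ≠ ⊥ := hb k hmk
      obtain ⟨g, hg⟩ : ∃ g : ℝ, v k = (g : EReal) :=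
        ⟨(v k).toReal, (EReal.coe_toReal (hvlt k) hvb).symm⟩
      have hgσ : g ≤ σ := by
        have := hg ▸ (hσ ▸ le_iSup v k)
        exact_mod_cast this
      rw [smul0, if_neg hmk, hg, ← EReal.coe_mul]
      exact_mod_cast mul_le_mul_of_nonneg_left hgσ (hm0 k)
  calc ∑ k, smul0 (m k) (v k) ≤ ∑ k, ((m k * σ : ℝ) : EReal) :=
        Finset.sum_le_sum fun k _ => hterm k
    _ = ((∑ k, m k * σ : ℝ) : EReal) := (ecoe_sum _ _).symm
    _ = (σ : EReal) := by rw [← Finset.sum_mul, hm1, one_mul]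
    _ = ⨆ k, v k := hσ.symm

lemma ereal_cases (v : EReal) : v = ⊥ ∨ v = ⊤ ∨ ∃ g : ℝ, v = (g : EReal) := by
  induction v using EReal.rec with
  | bot => exact Or.inl rfl
  | coe r => exact Or.inr (Or.inr ⟨r, rfl⟩)
  | top => exact Or.inr (Or.inl rfl)

lemma convex_strict_aux {a b p q u v : ℝ} (ha : 0 ≤ a) (hb : 0 ≤ b) (hab : a + b = 1)
    (h1 : p < u) (h2 : q < v) : a * p + b * q < a * u + b * v := by
  rcases eq_or_lt_of_le ha with h | h
  · have hb1 : b = 1 := by linarith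
    rw [← h, hb1]; simpa using h2
  · have h3 : a * p < a * u := by nlinarith
    have h4 : b * q ≤ b * v := by nlinarith
    linarith

end AuxStmt8

/-- Lagrangian duality for a finite max of convex lsc functions,
as in statement 7, but for possibly improper convex lsc functions. -/
theorem stmt8 {X : Type*} [NormedAddCommGroup X] [NormedSpace ℝ X]
    (n : ℕ) (hn : 0 < n) (f : Fin n → X → EReal)
    (hlsc : ∀ k, LowerSemicontinuous (f k))
    (hconv : ∀ k, IsConvexEFn (f k))
    (hdom : ∃ x, (⨆ k, f k x) ≠ ⊤) :
    ∃ l : Fin n → ℝ, (∀ k, 0 ≤ l k) ∧ (∑ k, l k = 1) ∧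
      (⨅ x, ∑ k, smul0 (l k) (f k x)) = (⨅ x, ⨆ k, f k x) ∧
      ∀ m : Fin n → ℝ, (∀ k, 0 ≤ m k) → (∑ k, m k = 1) →
        (⨅ x, ∑ k, smul0 (m k) (f k x)) ≤ ⨅ x, ⨆ k, f k x := by
  classical
  obtain ⟨x₀, hx₀⟩ := hdom
  have weak : ∀ m : Fin n → ℝ, (∀ k, 0 ≤ m k) → (∑ k, m k = 1) →
      (⨅ x, ∑ k, smul0 (m k) (f k x)) ≤ ⨅ x, ⨆ k, f k x :=
    fun m h0 h1 => iInf_mono fun x => weak_aux m h0 h1 (fun k => f k x)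
  set μ : EReal := ⨅ x, ⨆ k, f k x with hμdef
  by_cases hbot : μ = ⊥
  · set l₀ : Fin n → ℝ := fun k => if k = ⟨0, hn⟩ then 1 else 0 with hl₀
    have hl₀0 : ∀ k, 0 ≤ l₀ k := by intro k; simp only [hl₀]; split <;> norm_num
    have hl₀1 : ∑ k, l₀ k = 1 := by simp [hl₀]
    exact ⟨l₀, hl₀0, hl₀1,
      le_antisymm (weak l₀ hl₀0 hl₀1) (by rw [hbot]; exact bot_le), weak⟩
  have hμtop : μ ≠ ⊤ := by
    intro h
    exact hx₀ (top_unique (h ▸ iInf_le (fun x => ⨆ k, f k x) x₀))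
  obtain ⟨r, hr⟩ : ∃ r : ℝ, μ = (r : EReal) := ⟨μ.toReal, (EReal.coe_toReal hμtop hbot).symm⟩
  -- improper indices
  set B : Fin n → Prop := fun k => ∃ z, f k z = ⊥ with hB
  have hBbot : ∀ k x, B k → f k x ≠ ⊤ → f k x = ⊥ := by
    rintro k x ⟨z, hz⟩ hx
    exact improper_bot (hlsc k) (hconv k) hz hx
  have hx₀D : ∀ k, f k x₀ ≠ ⊤ := fun k h => hx₀ (top_unique (h ▸ le_iSup (fun k => f k x₀) k))
  -- the convex set A and its open enlargement
  set A : Set (Fin n → ℝ) :=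
    {y | ∃ x, (∀ k, ¬ B k → f k x ≤ (y k : EReal)) ∧ (∀ k, B k → f k x = ⊥)} with hAdef
  have hmemA : ∀ x, (∀ k, f k x ≠ ⊤) → (fun k => (f k x).toReal) ∈ A := by
    intro x hxD
    refine ⟨x, fun k hk => ?_, fun k hk => hBbot k x hk (hxD k)⟩
    have hkb : f k x ≠ ⊥ := fun hc => hk ⟨x, hc⟩
    rw [EReal.coe_toReal (hxD k) hkb]
  have hAconv : Convex ℝ A := by
    rintro y₁ ⟨x₁, h₁, h₁B⟩ y₂ ⟨x₂, h₂, h₂B⟩ a b ha hb hab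
    refine ⟨a • x₁ + b • x₂, fun k hk => ?_, fun k hk => ?_⟩
    · have m₁ : ((x₁, y₁ k) : X × ℝ) ∈ {p : X × ℝ | f k p.1 ≤ (p.2 : EReal)} := h₁ k hk
      have m₂ : ((x₂, y₂ k) : X × ℝ) ∈ {p : X × ℝ | f k p.1 ≤ (p.2 : EReal)} := h₂ k hk
      have := hconv k m₁ m₂ ha hb hab
      simpa [smul_eq_mul] using this
    · have m₁ : ((x₁, (0:ℝ)) : X × ℝ) ∈ {p : X × ℝ | f k p.1 ≤ (p.2 : EReal)} := by
        simp [Set.mem_setOf_eq, h₁B k hk]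
      have m₂ : ((x₂, (0:ℝ)) : X × ℝ) ∈ {p : X × ℝ | f k p.1 ≤ (p.2 : EReal)} := by
        simp [Set.mem_setOf_eq, h₂B k hk]
      have hmix := hconv k m₁ m₂ ha hb hab
      simp only [Prod.smul_mk, Prod.mk_add_mk, Set.mem_setOf_eq, smul_eq_mul,
        mul_zero, add_zero] at hmix
      refine hBbot k _ hk (fun hc => ?_)
      rw [hc] at hmix
      exact absurd hmix (by simp)
  set Aο : Set (Fin n → ℝ) := {y | ∃ a ∈ A, ∀ k, a k < y k} with hAοdef
  have hAοopen : IsOpen Aο := by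
    rw [isOpen_iff_mem_nhds]
    rintro y ⟨a, haA, hlt⟩
    have hopen : IsOpen {z : Fin n → ℝ | ∀ k, a k < z k} := by
      have : {z : Fin n → ℝ | ∀ k, a k < z k} = Set.pi Set.univ (fun k => Set.Ioi (a k)) := by
        ext z; simp [Set.mem_pi]
      rw [this]
      exact isOpen_set_pi Set.finite_univ (fun k _ => isOpen_Ioi)
    exact Filter.mem_of_superset (hopen.mem_nhds hlt) (fun z hz => ⟨a, haA, hz⟩)
  have hAοconv : Convex ℝ Aο := by
    rintro y₁ ⟨a₁, ha₁, hl₁⟩ y₂ ⟨a₂, ha₂, hl₂⟩ a b ha hb hab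
    refine ⟨a • a₁ + b • a₂, hAconv ha₁ ha₂ ha hb hab, fun k => ?_⟩
    simpa [smul_eq_mul] using convex_strict_aux ha hb hab (hl₁ k) (hl₂ k)
  -- the points to separate
  set ε : ℕ → ℝ := fun j => 1 / (j + 1 : ℝ) with hε
  have hεpos : ∀ j, 0 < ε j := fun j => by positivity
  have hbj : ∀ j : ℕ, (fun _ : Fin n => r - ε j) ∉ Aο := by
    rintro j ⟨a, ⟨x, hax1, hax2⟩, hlt⟩
    have hsup : (⨆ k, f k x) ≤ ((r - ε j : ℝ) : EReal) := by
      refine iSup_le fun k => ?_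
      by_cases hk : B k
      · rw [hax2 k hk]; exact bot_le
      · exact le_trans (hax1 k hk) (EReal.coe_le_coe_iff.mpr (le_of_lt (hlt k)))
    have h1 : μ ≤ ((r - ε j : ℝ) : EReal) :=
      le_trans (iInf_le (fun x => ⨆ k, f k x) x) hsup
    rw [hr] at h1
    have := EReal.coe_le_coe_iff.mp h1
    have := hεpos j
    linarith
  have hsep : ∀ j : ℕ, ∃ φ : (Fin n → ℝ) →L[ℝ] ℝ,
      ∀ y ∈ Aο, φ (fun _ => r - ε j) < φ y :=
    fun j => geometric_hahn_banach_point_open hAοconv hAοopen (hbj j)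
  choose φ hφ using hsep
  set e : Fin n → (Fin n → ℝ) := fun k => fun m => if k = m then 1 else 0 with he
  set c : ℕ → Fin n → ℝ := fun j k => φ j (e k) with hc
  have hφy : ∀ (j : ℕ) (y : Fin n → ℝ), φ j y = ∑ k, y k * c j k := by
    intro j y
    conv_lhs => rw [pi_eq_sum_univ y]
    rw [map_sum]
    exact Finset.sum_congr rfl fun k _ => by rw [map_smul, smul_eq_mul]
  set a' : Fin n → ℝ := fun k => (f k x₀).toReal + 1 with ha'
  have ha'mem : a' ∈ Aο := ⟨fun k => (f k x₀).toReal, hmemA x₀ hx₀D, fun k => lt_add_one _⟩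
  have hba' : ∀ j, φ j (fun _ => r - ε j) < φ j a' := fun j => hφ j a' ha'mem
  have hck0 : ∀ j k, 0 ≤ c j k := by
    intro j k
    by_contra hneg
    push_neg at hneg
    set t : ℝ := (φ j a' - φ j (fun _ => r - ε j)) / (-(c j k)) with htdef
    have htpos : 0 ≤ t := div_nonneg (by linarith [hba' j]) (by linarith)
    have hmem : a' + t • e k ∈ Aο := by
      refine ⟨fun m => (f m x₀).toReal, hmemA x₀ hx₀D, fun m => ?_⟩
      have hnn : (0:ℝ) ≤ t * (if k = m then 1 else 0) := by
        rcases eq_or_ne k m with h | h <;> simp [h, htpos]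
      simp only [Pi.add_apply, Pi.smul_apply, smul_eq_mul, he, ha']
      linarith
    have hlt := hφ j _ hmem
    rw [map_add, map_smul, smul_eq_mul] at hlt
    have hce : φ j (e k) = c j k := rfl
    rw [hce] at hlt
    have hcne : c j k ≠ 0 := ne_of_lt hneg
    have ht : t * c j k = -(φ j a' - φ j (fun _ => r - ε j)) := by
      rw [htdef, div_mul_eq_mul_div, div_neg, mul_div_assoc, div_self hcne, mul_one]
    linarith
  have hckB : ∀ j k, B k → c j k ≤ 0 := by
    intro j k hk
    by_contra hpos
    push_neg at hpos
    set t : ℝ := (φ j a' - φ j (fun _ => r - ε j)) / c j k with htdef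
    have htpos : 0 ≤ t := div_nonneg (by linarith [hba' j]) (le_of_lt hpos)
    have hmem : a' - t • e k ∈ Aο := by
      refine ⟨Function.update (fun m => (f m x₀).toReal) k ((f k x₀).toReal - t), ?_, fun m => ?_⟩
      · refine ⟨x₀, fun m hm => ?_, fun m hm => hBbot m x₀ hm (hx₀D m)⟩
        have hmk : m ≠ k := fun hcc => hm (hcc ▸ hk)
        rw [Function.update_of_ne hmk]
        have hkb : f m x₀ ≠ ⊥ := fun hcc => hm ⟨x₀, hcc⟩
        rw [EReal.coe_toReal (hx₀D m) hkb]
      · by_cases hmk : m = k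
        · subst hmk
          rw [Function.update_self]
          simp only [Pi.sub_apply, Pi.smul_apply, smul_eq_mul, he, ha']
          simp only [if_true, eq_self_iff_true, mul_one]
          norm_num
        · rw [Function.update_of_ne hmk]
          have hkm : k ≠ m := fun hcc => hmk hcc.symm
          simp only [Pi.sub_apply, Pi.smul_apply, smul_eq_mul, he, ha', if_neg hkm, mul_zero]
          norm_num
    have hlt := hφ j _ hmem
    rw [map_sub, map_smul, smul_eq_mul] at hlt
    have hce : φ j (e k) = c j k := rfl
    rw [hce] at hlt
    have ht : t * c j k = φ j a' - φ j (fun _ => r - ε j) := by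
      rw [htdef, div_mul_cancel₀ _ (ne_of_gt hpos)]
    linarith
  have hcsum : ∀ j, 0 < ∑ k, c j k := by
    intro j
    rcases (Finset.sum_nonneg fun k _ => hck0 j k).lt_or_eq with h | h
    · exact h
    · exfalso
      have hzero : ∀ k ∈ Finset.univ, c j k = 0 :=
        (Finset.sum_eq_zero_iff_of_nonneg fun (k : Fin n) _ => hck0 j k).mp h.symm
      have hAll : ∀ y : Fin n → ℝ, φ j y = 0 := by
        intro y
        rw [hφy]
        exact Finset.sum_eq_zero fun k hki => by rw [hzero k hki, mul_zero]
      have h1 := hba' j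
      rw [hAll, hAll] at h1
      exact lt_irrefl 0 h1
  set lam : ℕ → Fin n → ℝ := fun j k => c j k / ∑ i, c j i with hlam
  have hlam0 : ∀ j k, 0 ≤ lam j k := fun j k => div_nonneg (hck0 j k) (le_of_lt (hcsum j))
  have hlam1 : ∀ j, ∑ k, lam j k = 1 := fun j => by
    rw [hlam, ← Finset.sum_div, div_self (ne_of_gt (hcsum j))]
  have hlamB : ∀ j k, B k → lam j k = 0 := by
    intro j k hk
    have hzz : c j k = 0 := le_antisymm (hckB j k hk) (hck0 j k)
    simp [hlam, hzz]
  have hlammem : ∀ j, lam j ∈ stdSimplex ℝ (Fin n) := fun j => ⟨hlam0 j, hlam1 j⟩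
  have hkey : ∀ (j : ℕ) x, (∀ k, f k x ≠ ⊤) →
      r - ε j ≤ ∑ k, lam j k * (f k x).toReal := by
    intro j x hxD
    set g : Fin n → ℝ := fun k => (f k x).toReal with hg
    have hgA : g ∈ A := hmemA x hxD
    set C := ∑ k, c j k with hC
    set T := ∑ k, g k * c j k with hT
    have hCpos : 0 < C := hcsum j
    have hsum : ∑ k, lam j k * g k = T / C := by
      rw [hT, Finset.sum_div]
      exact Finset.sum_congr rfl fun k _ => by rw [hlam]; ring
    rw [hsum]
    refine le_of_forall_pos_le_add fun δ hδ => ?_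
    have hmem : (fun k => g k + δ) ∈ Aο := ⟨g, hgA, fun k => lt_add_of_pos_right _ hδ⟩
    have hlt := hφ j _ hmem
    rw [hφy, hφy] at hlt
    have hL : ∑ k, (r - ε j) * c j k = (r - ε j) * C := by rw [hC, Finset.mul_sum]
    have hR : ∑ k, (g k + δ) * c j k = T + δ * C := by
      rw [hT, hC, Finset.mul_sum, ← Finset.sum_add_distrib]
      exact Finset.sum_congr rfl fun k _ => by ring
    rw [hL, hR] at hlt
    have h2 : (r - ε j) * C < (T / C + δ) * C := by
      have h3 : (T / C) * C = T := div_mul_cancel₀ _ (ne_of_gt hCpos)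
      rw [add_mul, h3]
      exact hlt
    exact le_of_lt (lt_of_mul_lt_mul_right h2 hCpos.le)
  obtain ⟨l, hlmem, ψ, hψ, hlim⟩ :=
    (isCompact_stdSimplex ℝ (Fin n)).tendsto_subseq hlammem
  obtain ⟨hl0, hl1⟩ := hlmem
  have hcoord : ∀ k, Tendsto (fun j => lam (ψ j) k) atTop (𝓝 (l k)) := by
    intro k
    have := tendsto_pi_nhds.mp hlim k
    simpa [Function.comp] using this
  have hlB : ∀ k, B k → l k = 0 := by
    intro k hk
    have h1 : Tendsto (fun _ : ℕ => (0:ℝ)) atTop (𝓝 (l k)) := by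
      have h2 := hcoord k
      simp only [hlamB _ k hk] at h2
      exact h2
    exact tendsto_nhds_unique h1 tendsto_const_nhds
  have hεlim : Tendsto (fun j => r - ε (ψ j)) atTop (𝓝 r) := by
    have h0 : Tendsto (fun j : ℕ => ε j) atTop (𝓝 0) := by
      rw [hε]
      exact tendsto_one_div_add_atTop_nhds_zero_nat
    have h1 : Tendsto (fun j => ε (ψ j)) atTop (𝓝 0) := h0.comp hψ.tendsto_atTop
    have h2 := (tendsto_const_nhds : Tendsto (fun _ : ℕ => r) atTop (𝓝 r)).sub h1
    simpa using h2
  have hmain : ∀ x, (r : EReal) ≤ ∑ k, smul0 (l k) (f k x) := by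
    intro x
    by_cases hxD : ∀ k, f k x ≠ ⊤
    · have hterm : ∀ k, smul0 (l k) (f k x) = ((l k * (f k x).toReal : ℝ) : EReal) := by
        intro k
        by_cases hk : B k
        · rw [hlB k hk, smul0, if_pos rfl, if_neg (hxD k), zero_mul, EReal.coe_zero]
        · have hkb : f k x ≠ ⊥ := fun hcc => hk ⟨x, hcc⟩
          by_cases hlk : l k = 0
          · rw [hlk, smul0, if_pos rfl, if_neg (hxD k), zero_mul, EReal.coe_zero]
          · rw [smul0, if_neg hlk, ← EReal.coe_toReal (hxD k) hkb, EReal.toReal_coe,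
              ← EReal.coe_mul]
      rw [Finset.sum_congr rfl fun k _ => hterm k, ← ecoe_sum]
      rw [EReal.coe_le_coe_iff]
      refine le_of_tendsto_of_tendsto' hεlim ?_ (fun j => hkey (ψ j) x hxD)
      exact tendsto_finset_sum _ fun k _ => (hcoord k).mul tendsto_const_nhds
    · push_neg at hxD
      obtain ⟨k₀, hk₀⟩ := hxD
      have hne : ∀ k ∈ Finset.univ, smul0 (l k) (f k x) ≠ ⊥ := by
        intro k _
        rw [smul0]
        by_cases hlk : l k = 0
        · rw [if_pos hlk]; split <;> simp
        · rw [if_neg hlk]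
          have hpos : (0:ℝ) < l k := lt_of_le_of_ne (hl0 k) (Ne.symm hlk)
          have hkb : f k x ≠ ⊥ := fun hcc => hlk (hlB k ⟨x, hcc⟩)
          rcases ereal_cases (f k x) with h | h | ⟨g, h⟩
          · exact absurd h hkb
          · rw [h, EReal.coe_mul_top_of_pos hpos]; simp
          · rw [h, ← EReal.coe_mul]; exact EReal.coe_ne_bot _
      have htop : smul0 (l k₀) (f k₀ x) = ⊤ := by
        rw [smul0, hk₀]
        by_cases hlk : l k₀ = 0
        · rw [if_pos hlk, if_pos rfl]
        · rw [if_neg hlk]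
          exact EReal.coe_mul_top_of_pos (lt_of_le_of_ne (hl0 k₀) (Ne.symm hlk))
      rw [esum_eq_top (Finset.mem_univ k₀) htop hne]
      exact le_top
  refine ⟨l, hl0, hl1, le_antisymm (weak l hl0 hl1) ?_, weak⟩
  rw [hr]
  exact le_iInf fun x => hmain x
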